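/- If a circle is partitioned into n ≥ 3 arcs of equal length by n equally spaced points, then two side disks intersect if and only if the corresponding arcs are adjacent; hence the number of disjoint pairs of side disks equals n(n−3)/2. -/

import Mathlib

open EuclideanGeometry Metric Real

/-- The point at angle `θ` on the circle centered at `O` with radius `r`
in the Euclidean plane. -/
noncomputable def circlePt (O : EuclideanSpace ℝ (Fin 2)) (r θ : ℝ) :
    EuclideanSpace ℝ (Fin 2) :=
  O + r • (WithLp.equiv 2 (Fin 2 → ℝ)).symm ![Real.cos θ, Real.sin θ]

/-- The side disk of the arc from angle `a` to angle `b` (traversed in increasing angle)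
of the circle centered at `O` with radius `r`: the closed disk centered at the midpoint
of the arc whose boundary passes through the two endpoints of the arc. -/
noncomputable def sideDisk (O : EuclideanSpace ℝ (Fin 2)) (r a b : ℝ) :
    Set (EuclideanSpace ℝ (Fin 2)) :=
  Metric.closedBall (circlePt O r ((a + b) / 2))
    (dist (circlePt O r ((a + b) / 2)) (circlePt O r a))

lemma dist_circlePt (O : EuclideanSpace ℝ (Fin 2)) {r : ℝ} (hr : 0 ≤ r) (a b : ℝ) :
    dist (circlePt O r a) (circlePt O r b) = 2 * r * |sin ((a - b) / 2)| := by
  have h : ∀ i : Fin 2, circlePt O r a i - circlePt O r b i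
      = r * (![Real.cos a, Real.sin a] i - ![Real.cos b, Real.sin b] i) := by
    intro i
    simp [circlePt, PiLp.add_apply, PiLp.smul_apply, smul_eq_mul]
    ring
  rw [EuclideanSpace.dist_eq]
  rw [Fin.sum_univ_two]
  simp only [Real.dist_eq, sq_abs, h 0, h 1, Matrix.cons_val_zero, Matrix.cons_val_one,
    Matrix.head_cons]
  have key : (r * (Real.cos a - Real.cos b)) ^ 2 + (r * (Real.sin a - Real.sin b)) ^ 2
      = (2 * r * |sin ((a - b) / 2)|) ^ 2 := by
    have h1 : Real.cos (a - b) = Real.cos a * Real.cos b + Real.sin a * Real.sin b :=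
      Real.cos_sub a b
    have h2 : Real.sin ((a - b) / 2) ^ 2 = 1 / 2 - Real.cos (a - b) / 2 := by
      have := Real.sin_sq_eq_half_sub ((a - b) / 2)
      rwa [show 2 * ((a - b) / 2) = a - b by ring] at this
    have h3 := Real.sin_sq_add_cos_sq a
    have h4 := Real.sin_sq_add_cos_sq b
    rw [show (2 * r * |sin ((a - b) / 2)|) ^ 2 = (2*r)^2 * sin ((a - b) / 2) ^ 2 by
      rw [mul_pow, sq_abs]]
    linear_combination (r^2) * h3 + (r^2) * h4 + 2*(r^2) * h1 - 4*(r^2) * h2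
  rw [key, Real.sqrt_sq (by positivity)]

lemma ball_inter_iff {E : Type*} [NormedAddCommGroup E] [NormedSpace ℝ E]
    (c₁ c₂ : E) {ρ : ℝ} (hρ : 0 ≤ ρ) :
    (Metric.closedBall c₁ ρ ∩ Metric.closedBall c₂ ρ).Nonempty ↔ dist c₁ c₂ ≤ 2 * ρ := by
  constructor
  · rintro ⟨p, h1, h2⟩
    rw [Metric.mem_closedBall] at h1 h2
    have := dist_triangle c₁ p c₂
    rw [dist_comm p c₁] at h1
    linarith [dist_comm p c₂ ▸ h2]
  · intro h
    refine ⟨midpoint ℝ c₁ c₂, ?_, ?_⟩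
    · rw [Metric.mem_closedBall, dist_midpoint_left, Real.norm_ofNat]
      rw [show ((2:ℝ))⁻¹ * dist c₁ c₂ = dist c₁ c₂ / 2 by ring]
      linarith
    · rw [Metric.mem_closedBall, midpoint_comm, dist_midpoint_left, Real.norm_ofNat,
        dist_comm c₂ c₁]
      rw [show ((2:ℝ))⁻¹ * dist c₁ c₂ = dist c₁ c₂ / 2 by ring]
      linarith

-- sin(k π / n) ≥ 4/n when 2 ≤ k and 2k ≤ n
lemma sin_lower {n k : ℕ} (hn : 0 < n) (hk2 : 2 ≤ k) (hhalf : 2 * k ≤ n) :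
    4 / (n:ℝ) ≤ Real.sin (k * π / n) := by
  have hnR : (0:ℝ) < n := by exact_mod_cast hn
  have hkR : (2:ℝ) ≤ k := by exact_mod_cast hk2
  have hhalfR : 2 * (k:ℝ) ≤ n := by exact_mod_cast hhalf
  have hx0 : 0 ≤ (k:ℝ) * π / n := by positivity
  have hx1 : (k:ℝ) * π / n ≤ π / 2 := by
    rw [div_le_div_iff₀ hnR two_pos]
    nlinarith [Real.pi_pos]
  have := Real.mul_le_sin hx0 hx1
  have h2 : 2 / π * ((k:ℝ) * π / n) = 2 * k / n := by
    field_simp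
  rw [h2] at this
  refine le_trans ?_ this
  rw [div_le_div_iff₀ hnR hnR]
  nlinarith

lemma sin_far {n k : ℕ} (hn : 3 ≤ n) (hk2 : 2 ≤ k) (hk3 : k ≤ n - 2) :
    2 * Real.sin (π / (2 * n)) < Real.sin (k * π / n) := by
  have hnR : (0:ℝ) < n := by positivity
  have hmain : 4 / (n:ℝ) ≤ Real.sin (k * π / n) := by
    rcases le_or_gt (2 * k) n with h | h
    · exact sin_lower (by omega) hk2 h
    · have hkn : k ≤ n := by omega
      have heq : Real.sin ((k:ℝ) * π / n) = Real.sin (((n - k : ℕ)) * π / n) := by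
        rw [← Real.sin_pi_sub]
        congr 1
        have : ((n - k : ℕ) : ℝ) = (n:ℝ) - k := by
          push_cast [Nat.cast_sub hkn]; ring
        rw [this]
        field_simp
      rw [heq]
      exact sin_lower (by omega) (by omega) (by omega)
  have hsmall : 2 * Real.sin (π / (2 * n)) < 4 / (n:ℝ) := by
    have hpos : 0 < π / (2 * n) := by positivity
    have := Real.sin_lt hpos
    have hpi : π < 4 := by linarith [Real.pi_lt_d2]
    have : Real.sin (π / (2 * n)) < π / (2 * n) := this
    calc 2 * Real.sin (π / (2 * n)) < 2 * (π / (2 * n)) := by linarith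
      _ = π / n := by field_simp
      _ < 4 / n := by gcongr
  linarith

lemma sin_adj {n : ℕ} (hn : 3 ≤ n) :
    Real.sin (1 * π / n) ≤ 2 * Real.sin (π / (2 * n)) := by
  have hnR : (0:ℝ) < n := by positivity
  have h : (1:ℝ) * π / n = 2 * (π / (2 * n)) := by field_simp
  rw [h, Real.sin_two_mul]
  have hs : 0 ≤ Real.sin (π / (2 * n)) := by
    apply Real.sin_nonneg_of_nonneg_of_le_pi
    · positivity
    · rw [div_le_iff₀ (by positivity)]
      have h3 : (3:ℝ) ≤ n := by exact_mod_cast hn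
      nlinarith [Real.pi_pos]
  nlinarith [Real.cos_le_one (π / (2 * n))]

lemma trig_key {n k : ℕ} (hn : 3 ≤ n) (hk1 : 1 ≤ k) (hk2 : k ≤ n - 1) :
    Real.sin (k * π / n) ≤ 2 * Real.sin (π / (2 * n)) ↔ (k = 1 ∨ k = n - 1) := by
  constructor
  · intro h
    by_contra hc
    push_neg at hc
    have h2 : 2 ≤ k := by omega
    have h3 : k ≤ n - 2 := by omega
    have := sin_far hn h2 h3
    linarith
  · rintro (rfl | rfl)
    · exact_mod_cast sin_adj hn
    · have hkn : (((n-1:ℕ)):ℝ) = (n:ℝ) - 1 := by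
        push_cast [Nat.cast_sub (by omega : 1 ≤ n)]; ring
      have heq : Real.sin (((n-1:ℕ):ℝ) * π / n) = Real.sin (1 * π / n) := by
        rw [hkn, ← Real.sin_pi_sub]
        congr 1
        have hnR : (0:ℝ) < n := by positivity
        field_simp
        ring
      rw [heq]
      exact sin_adj hn

lemma card_lt_pairs (n : ℕ) :
    ((Finset.range n ×ˢ Finset.range n).filter (fun p => p.1 < p.2)).card = n * (n-1) / 2 := by
  have h : ((Finset.range n ×ˢ Finset.range n).filter (fun p => p.1 < p.2))
      = (Finset.range n).biUnion (fun j => (Finset.range j).image (fun i => (i, j))) := by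
    ext p
    simp only [Finset.mem_filter, Finset.mem_product, Finset.mem_range, Finset.mem_biUnion, Finset.mem_image]
    constructor
    · rintro ⟨⟨h1, h2⟩, h3⟩
      exact ⟨p.2, h2, p.1, h3, rfl⟩
    · rintro ⟨j, hj, i, hi, rfl⟩
      exact ⟨⟨lt_trans hi hj, hj⟩, hi⟩
  rw [h, Finset.card_biUnion]
  · have : ∀ j ∈ Finset.range n, ((Finset.range j).image (fun i => (i, j))).card = j := by
      intro j _
      rw [Finset.card_image_of_injective _ (fun a b hab => (Prod.mk.injEq _ _ _ _).mp hab |>.1)]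
      exact Finset.card_range j
    rw [Finset.sum_congr rfl this]
    have := Finset.sum_range_id_mul_two n
    omega
  · intro x _ y _ hxy
    simp only [Finset.disjoint_left, Finset.mem_image, Finset.mem_range]
    rintro p ⟨i, hi, rfl⟩ ⟨i', hi', h⟩
    exact hxy ((Prod.mk.injEq _ _ _ _).mp h |>.2.symm)

lemma count_part (n : ℕ) (hn : 3 ≤ n) (P : ℕ × ℕ → Prop)
    (hP : ∀ i j : ℕ, i < j → j < n → (P (i, j) ↔ ¬(j = i + 1 ∨ (i = 0 ∧ j = n - 1)))) :
    {p : ℕ × ℕ | p.1 < p.2 ∧ p.2 < n ∧ P p}.ncard = n * (n - 3) / 2 := by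
  classical
  set A := (Finset.range n ×ˢ Finset.range n).filter (fun p => p.1 < p.2) with hA
  set B : Finset (ℕ × ℕ) :=
    ((Finset.range (n-1)).image (fun i => (i, i+1))) ∪ {(0, n-1)} with hB
  have hmemB : ∀ p : ℕ × ℕ, p ∈ B ↔ (p.2 = p.1 + 1 ∧ p.2 < n) ∨ p = (0, n-1) := by
    intro p
    simp only [hB, Finset.mem_union, Finset.mem_image, Finset.mem_range, Finset.mem_singleton]
    constructor
    · rintro (⟨i, hi, rfl⟩ | rfl)
      · exact Or.inl ⟨rfl, by omega⟩
      · exact Or.inr rfl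
    · rintro (⟨h1, h2⟩ | rfl)
      · exact Or.inl ⟨p.1, by omega, by rw [← h1]⟩
      · exact Or.inr rfl
  have hBA : B ⊆ A := by
    intro p hp
    rw [hmemB] at hp
    simp only [hA, Finset.mem_filter, Finset.mem_product, Finset.mem_range]
    rcases hp with ⟨h1, h2⟩ | rfl
    · exact ⟨⟨by omega, h2⟩, by omega⟩
    · exact ⟨⟨by omega, by omega⟩, by omega⟩
  have hcardB : B.card = n := by
    rw [hB, Finset.card_union_of_disjoint, Finset.card_image_of_injective _
      (fun a b hab => (Prod.mk.injEq _ _ _ _).mp hab |>.1), Finset.card_range,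
      Finset.card_singleton]
    · omega
    · simp only [Finset.disjoint_left, Finset.mem_image, Finset.mem_range,
        Finset.mem_singleton]
      rintro p ⟨i, hi, rfl⟩ h
      rw [Prod.mk.injEq] at h
      omega
  have hset : {p : ℕ × ℕ | p.1 < p.2 ∧ p.2 < n ∧ P p} = ↑(A \ B) := by
    ext p
    simp only [Set.mem_setOf_eq, Finset.coe_sdiff, Set.mem_diff, Finset.mem_coe,
      hA, Finset.mem_filter, Finset.mem_product, Finset.mem_range, hmemB]
    constructor
    · rintro ⟨h1, h2, h3⟩
      refine ⟨⟨⟨by omega, h2⟩, h1⟩, ?_⟩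
      have := (hP p.1 p.2 h1 h2).mp (by simpa using h3)
      rintro (⟨ha, _⟩ | hb)
      · exact this (Or.inl ha)
      · exact this (Or.inr ⟨congrArg Prod.fst hb, congrArg Prod.snd hb⟩)
    · rintro ⟨⟨⟨_, h2⟩, h1⟩, h3⟩
      refine ⟨h1, h2, ?_⟩
      have : ¬(p.2 = p.1 + 1 ∨ (p.1 = 0 ∧ p.2 = n - 1)) := by
        rintro (ha | ⟨hb, hc⟩)
        · exact h3 (Or.inl ⟨ha, h2⟩)
        · exact h3 (Or.inr (by rw [Prod.ext_iff]; exact ⟨hb, hc⟩))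
      have := (hP p.1 p.2 h1 h2).mpr this
      simpa using this
  rw [hset, Set.ncard_coe_finset, Finset.card_sdiff_of_subset hBA, card_lt_pairs, hcardB]
  obtain ⟨m, rfl⟩ : ∃ m, n = m + 3 := ⟨n - 3, by omega⟩
  have h1 : (m+3) * (m+3-1) = (m+3)*m + 2*(m+3) := by
    rw [show m+3-1 = m+2 from by omega]; ring
  have h2 : (m+3) * (m+3-3) = (m+3)*m := by
    rw [show m+3-3 = m from by omega]
  rw [h1, h2]
  omega

lemma pair_iff (O : EuclideanSpace ℝ (Fin 2)) {r : ℝ} (hr : 0 < r)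
    {n : ℕ} (hn : 3 ≤ n) (θ : ℕ → ℝ) (hθ : ∀ m : ℕ, θ m = m * (2 * π / n))
    {i j : ℕ} (hij : i < j) (hjn : j < n) :
    ((sideDisk O r (θ i) (θ (i + 1)) ∩ sideDisk O r (θ j) (θ (j + 1))).Nonempty ↔
      (j = i + 1 ∨ (i = 0 ∧ j = n - 1))) := by
  have hnR : (0:ℝ) < n := by positivity
  have hsin0 : 0 ≤ Real.sin (π / (2 * n)) := by
    apply Real.sin_nonneg_of_nonneg_of_le_pi
    · positivity
    · rw [div_le_iff₀ (by positivity)]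
      have h3 : (3:ℝ) ≤ n := by exact_mod_cast hn
      nlinarith [Real.pi_pos]
  -- radius of each side disk
  have hrad : ∀ m : ℕ, dist (circlePt O r ((θ m + θ (m+1)) / 2)) (circlePt O r (θ m))
      = 2 * r * Real.sin (π / (2 * n)) := by
    intro m
    rw [dist_circlePt O hr.le]
    congr 1
    rw [abs_of_nonneg]
    · congr 1
      rw [hθ, hθ]
      push_cast
      field_simp
      ring
    · rw [show ((θ m + θ (m+1)) / 2 - θ m) / 2 = π / (2 * n) by
        rw [hθ, hθ]; push_cast; field_simp; ring]
      exact hsin0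
  set ρ := 2 * r * Real.sin (π / (2 * n)) with hρdef
  have hρ : 0 ≤ ρ := by positivity
  have hsd : ∀ m : ℕ, sideDisk O r (θ m) (θ (m+1))
      = Metric.closedBall (circlePt O r ((θ m + θ (m+1)) / 2)) ρ := by
    intro m
    rw [sideDisk, hrad]
  rw [hsd i, hsd j, ball_inter_iff _ _ hρ]
  set k := j - i with hk
  have hk1 : 1 ≤ k := by omega
  have hk2 : k ≤ n - 1 := by omega
  -- distance of centers
  have hdist : dist (circlePt O r ((θ i + θ (i+1)) / 2)) (circlePt O r ((θ j + θ (j+1)) / 2))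
      = 2 * r * Real.sin (k * π / n) := by
    rw [dist_circlePt O hr.le]
    congr 1
    have hang : ((θ i + θ (i+1)) / 2 - (θ j + θ (j+1)) / 2) / 2 = -((k:ℝ) * π / n) := by
      rw [hθ, hθ, hθ, hθ]
      have hkc : (k:ℝ) = (j:ℝ) - i := by
        rw [hk]; push_cast [Nat.cast_sub hij.le]; ring
      rw [hkc]
      push_cast
      field_simp
      ring
    rw [hang, Real.sin_neg, abs_neg, abs_of_nonneg]
    apply Real.sin_nonneg_of_nonneg_of_le_pi
    · positivity
    · rw [div_le_iff₀ hnR]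
      have hkn : (k:ℝ) ≤ n := by exact_mod_cast (by omega : k ≤ n)
      nlinarith [Real.pi_pos]
  rw [hdist, hρdef]
  have hiff : 2 * r * Real.sin (k * π / n) ≤ 2 * (2 * r * Real.sin (π / (2 * n))) ↔
      Real.sin (k * π / n) ≤ 2 * Real.sin (π / (2 * n)) := by
    constructor <;> intro h <;> nlinarith
  rw [hiff, trig_key hn hk1 hk2]
  omega


/-- For a circle partitioned into `n ≥ 3` equal arcs by equally spaced points, two side
disks intersect iff the arcs are adjacent; hence the number of disjoint pairs equals
`n(n-3)/2`. -/
theorem stmt_12 (O : EuclideanSpace ℝ (Fin 2)) (r : ℝ) (hr : 0 < r)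
    (n : ℕ) (hn : 3 ≤ n) (θ : ℕ → ℝ) (hθ : ∀ m : ℕ, θ m = m * (2 * π / n)) :
    (∀ i j : ℕ, i < j → j < n →
      ((sideDisk O r (θ i) (θ (i + 1)) ∩ sideDisk O r (θ j) (θ (j + 1))).Nonempty ↔
        (j = i + 1 ∨ (i = 0 ∧ j = n - 1)))) ∧
    {p : ℕ × ℕ | p.1 < p.2 ∧ p.2 < n ∧
        sideDisk O r (θ p.1) (θ (p.1 + 1)) ∩ sideDisk O r (θ p.2) (θ (p.2 + 1)) = ∅}.ncard =
      n * (n - 3) / 2 := by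
  refine ⟨fun i j hij hjn => pair_iff O hr hn θ hθ hij hjn, ?_⟩
  apply count_part n hn
  intro i j hij hjn
  rw [← Set.not_nonempty_iff_eq_empty]
  exact not_congr (pair_iff O hr hn θ hθ hij hjn)
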